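/- Let p : (0,1) → [1,∞) be nondecreasing with p(1) < ∞, satisfying ∫_a^1 x^{-1/p'(x)} dx/x ≤ C a^{-1/p'(a)} for all a ∈ (0,1). Let φ(t) = t^{-1/p'(t)}. Then there exists C₁ > 0 such that for all 0 < x < 1/4 and x/2 < y < 2x (with y ∈ (0,1)), (1/C₁) φ(x) ≤ φ(y) ≤ C₁ φ(x). -/

import Mathlib

open MeasureTheory Set Real

/-- Elementary pointwise comparison for `t ↦ t^{-α(t)}` between comparable points
when the exponent at the smaller point is smaller. -/
lemma aux_pt_3 (s t σ τ : ℝ) (hs : 0 < s) (hst : s ≤ t) (ht1 : t ≤ 1)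
    (hts : t ≤ 2 * s) (hστ : σ ≤ τ) (hσ : 0 ≤ σ) (hτ : τ ≤ 1) :
    s ^ (-σ) ≤ 2 * t ^ (-τ) := by
  have ht0 : 0 < t := hs.trans_le hst
  have hτ0 : 0 ≤ τ := hσ.trans hστ
  have h1 : s ^ (-σ) ≤ s ^ (-τ) :=
    Real.rpow_le_rpow_of_exponent_ge hs (hst.trans ht1) (neg_le_neg hστ)
  have h2 : s ^ (-τ) ≤ (t / 2) ^ (-τ) := by
    rw [Real.rpow_neg hs.le, Real.rpow_neg (by positivity)]
    have hb : (t / 2) ^ τ ≤ s ^ τ :=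
      Real.rpow_le_rpow (by positivity) (by linarith) hτ0
    exact inv_anti₀ (Real.rpow_pos_of_pos (by positivity) _) hb
  have h3 : (t / 2) ^ (-τ) = t ^ (-τ) * 2 ^ τ := by
    rw [Real.div_rpow ht0.le (by norm_num : (0:ℝ) ≤ 2),
      Real.rpow_neg (by norm_num : (0:ℝ) ≤ 2), div_eq_mul_inv, inv_inv]
  have h4 : (2:ℝ) ^ τ ≤ 2 := by
    calc (2:ℝ) ^ τ ≤ (2:ℝ) ^ (1:ℝ) :=
          Real.rpow_le_rpow_of_exponent_le one_le_two hτ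
      _ = 2 := Real.rpow_one 2
  have h5 : t ^ (-τ) * 2 ^ τ ≤ 2 * t ^ (-τ) := by
    have ht' : 0 ≤ t ^ (-τ) := Real.rpow_nonneg ht0.le _
    nlinarith [Real.rpow_nonneg (by norm_num : (0:ℝ) ≤ 2) τ]
  linarith [h1, h2, h3 ▸ h2]

/-- Core estimate using the Zygmund-type integral condition. -/
lemma aux_core_3 (p : ℝ → ℝ) (C : ℝ)
    (hmono : MonotoneOn p (Set.Ioc 0 1))
    (hp1 : ∀ x ∈ Set.Ioc (0:ℝ) 1, 1 ≤ p x)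
    (hint : ∀ a ∈ Set.Ioo (0:ℝ) 1,
      ∫ x in Set.Ioc a 1, x ^ (-(1 - 1 / p x)) / x ≤ C * a ^ (-(1 - 1 / p a)))
    (x y : ℝ) (hx0 : 0 < x) (hx1 : x < 1) (hxy : x ≤ y) (h2y : 2 * y ≤ 1) :
    Real.log 2 / 2 * y ^ (-(1 - 1 / p y)) ≤ C * x ^ (-(1 - 1 / p x)) := by
  have hy0 : 0 < y := lt_of_lt_of_le hx0 hxy
  set f : ℝ → ℝ := fun t => t ^ (-(1 - 1 / p t)) / t with hf
  -- exponent bounds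
  have hα : ∀ t ∈ Set.Ioc (0:ℝ) 1, 0 ≤ 1 - 1 / p t ∧ 1 - 1 / p t ≤ 1 := by
    intro t ht
    have h1 : 1 ≤ p t := hp1 t ht
    have h0 : 0 < p t := lt_of_lt_of_le one_pos h1
    constructor
    · have : 1 / p t ≤ 1 := by
        rw [div_le_one h0]; exact h1
      linarith
    · have : 0 ≤ 1 / p t := by positivity
      linarith
  -- monotonicity of exponent
  have hαmono : ∀ s t : ℝ, s ∈ Set.Ioc (0:ℝ) 1 → t ∈ Set.Ioc (0:ℝ) 1 → s ≤ t →
      1 - 1 / p s ≤ 1 - 1 / p t := by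
    intro s t hs ht hst
    have h0s : 0 < p s := lt_of_lt_of_le one_pos (hp1 s hs)
    have : 1 / p t ≤ 1 / p s := one_div_le_one_div_of_le h0s (hmono hs ht hst)
    linarith
  -- measurable version via monotone clamp
  set c : ℝ → ℝ := fun t => min (max t x) 1 with hc
  have hcmono : Monotone c := ((monotone_id.max monotone_const).min monotone_const)
  have hcmem : ∀ t, c t ∈ Set.Ioc (0:ℝ) 1 := by
    intro t
    refine ⟨lt_min (lt_of_lt_of_le hx0 (le_max_right _ _)) one_pos, min_le_right _ _⟩
  have hqmono : Monotone (fun t => p (c t)) :=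
    fun s t h => hmono (hcmem s) (hcmem t) (hcmono h)
  have hmeasg : Measurable (fun t : ℝ => t ^ (-(1 - 1 / p (c t))) / t) := by
    have hq : Measurable fun t => p (c t) := hqmono.measurable
    have he : Measurable fun t : ℝ => (-(1 - 1 / p (c t))) :=
      (measurable_const.sub (measurable_const.div hq)).neg
    exact (measurable_id.pow he).div measurable_id
  have hceq : ∀ t ∈ Set.Ioc x 1, c t = t := by
    intro t ht
    simp only [hc]
    rw [max_eq_left ht.1.le, min_eq_left ht.2]
  have haesm : AEStronglyMeasurable f (volume.restrict (Set.Ioc x 1)) := by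
    refine (hmeasg.aestronglyMeasurable.restrict).congr ?_
    refine (ae_restrict_iff' measurableSet_Ioc).mpr (ae_of_all _ ?_)
    intro t ht
    simp only [hf, hceq t ht]
  -- boundedness on Ioc x 1
  have hbdd : ∀ᵐ t ∂(volume.restrict (Set.Ioc x 1)), ‖f t‖ ≤ x⁻¹ * x⁻¹ := by
    refine (ae_restrict_iff' measurableSet_Ioc).mpr (ae_of_all _ ?_)
    intro t ht
    have ht0 : 0 < t := lt_trans hx0 ht.1
    have htm : t ∈ Set.Ioc (0:ℝ) 1 := ⟨ht0, ht.2⟩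
    obtain ⟨hα0, hα1⟩ := hα t htm
    have h1 : t ^ (-(1 - 1 / p t)) ≤ t ^ (-(1:ℝ)) :=
      Real.rpow_le_rpow_of_exponent_ge ht0 ht.2 (by linarith)
    rw [Real.rpow_neg_one] at h1
    have h2 : t⁻¹ ≤ x⁻¹ := by
      apply inv_anti₀ hx0 ht.1.le
    have hnn : 0 ≤ f t := by
      simp only [hf]
      positivity
    rw [Real.norm_eq_abs, abs_of_nonneg hnn]
    simp only [hf, div_eq_mul_inv]
    have h3 : t ^ (-(1 - 1 / p t)) ≤ x⁻¹ := le_trans h1 h2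
    have h4 : 0 ≤ t ^ (-(1 - 1 / p t)) := Real.rpow_nonneg ht0.le _
    have h5 : 0 ≤ t⁻¹ := by positivity
    exact mul_le_mul h3 h2 h5 (by positivity)
  have hInt : IntegrableOn f (Set.Ioc x 1) volume :=
    ⟨haesm, HasFiniteIntegral.restrict_of_bounded _ measure_Ioc_lt_top hbdd⟩
  have hnonneg : ∀ t ∈ Set.Ioc x 1, 0 ≤ f t := by
    intro t ht
    have ht0 : 0 < t := lt_trans hx0 ht.1
    simp only [hf]; positivity
  have hsub : Set.Ioc y (2 * y) ⊆ Set.Ioc x 1 := Set.Ioc_subset_Ioc hxy h2y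
  -- compare integrals
  have step1 : ∫ t in Set.Ioc y (2 * y), f t ≤ ∫ t in Set.Ioc x 1, f t := by
    apply setIntegral_mono_set hInt
    · exact (ae_restrict_iff' measurableSet_Ioc).mpr (ae_of_all _ hnonneg)
    · exact HasSubset.Subset.eventuallyLE hsub
  -- pointwise lower bound on Ioc y (2y)
  set A : ℝ := y ^ (-(1 - 1 / p y)) with hA
  have hA0 : 0 ≤ A := Real.rpow_nonneg hy0.le _
  have hptwise : ∀ t ∈ Set.Ioc y (2 * y), A / 2 * t⁻¹ ≤ f t := by
    intro t ht
    have ht0 : 0 < t := lt_trans hy0 ht.1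
    have htm : t ∈ Set.Ioc (0:ℝ) 1 := ⟨ht0, ht.2.trans h2y⟩
    have hym : y ∈ Set.Ioc (0:ℝ) 1 := ⟨hy0, by linarith⟩
    obtain ⟨hαy0, hαy1⟩ := hα y hym
    obtain ⟨hαt0, hαt1⟩ := hα t htm
    have hmt : 1 - 1 / p y ≤ 1 - 1 / p t := hαmono y t hym htm ht.1.le
    have key : A ≤ 2 * t ^ (-(1 - 1 / p t)) :=
      aux_pt_3 y t _ _ hy0 ht.1.le (htm.2) ht.2 hmt hαy0 hαt1
    have : A / 2 ≤ t ^ (-(1 - 1 / p t)) := by linarith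
    simp only [hf, div_eq_mul_inv]
    exact mul_le_mul_of_nonneg_right this (by positivity)
  have hIntSmall : IntegrableOn f (Set.Ioc y (2 * y)) volume := hInt.mono_set hsub
  have hIntInv : IntegrableOn (fun t : ℝ => A / 2 * t⁻¹) (Set.Ioc y (2 * y)) volume := by
    apply IntegrableOn.mono_set (t := Set.Icc y (2 * y)) _ Set.Ioc_subset_Icc_self
    apply ContinuousOn.integrableOn_compact isCompact_Icc
    apply ContinuousOn.mul continuousOn_const
    apply ContinuousOn.inv₀ continuousOn_id
    intro t ht
    have : 0 < t := lt_of_lt_of_le hy0 ht.1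
    exact this.ne'
  have step2 : ∫ t in Set.Ioc y (2 * y), A / 2 * t⁻¹ ≤ ∫ t in Set.Ioc y (2 * y), f t :=
    setIntegral_mono_on hIntInv hIntSmall measurableSet_Ioc hptwise
  -- compute the left integral
  have hy2 : y ≤ 2 * y := by linarith
  have hcomp : ∫ t in Set.Ioc y (2 * y), A / 2 * t⁻¹ = A / 2 * Real.log 2 := by
    rw [MeasureTheory.integral_const_mul]
    congr 1
    rw [← intervalIntegral.integral_of_le hy2, integral_inv]
    · rw [mul_div_assoc, div_self hy0.ne', mul_one]
    · intro h
      rw [Set.uIcc_of_le hy2] at h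
      exact absurd h.1 (by linarith)
  have hxm : x ∈ Set.Ioo (0:ℝ) 1 := ⟨hx0, hx1⟩
  have hfinal := hint x hxm
  calc Real.log 2 / 2 * y ^ (-(1 - 1 / p y)) = A / 2 * Real.log 2 := by rw [← hA]; ring
    _ = ∫ t in Set.Ioc y (2 * y), A / 2 * t⁻¹ := hcomp.symm
    _ ≤ ∫ t in Set.Ioc y (2 * y), f t := step2
    _ ≤ ∫ t in Set.Ioc x 1, f t := step1
    _ ≤ C * x ^ (-(1 - 1 / p x)) := hfinal

/-- Lemma 3.4: under the Zygmund-type integral condition the function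
`φ(t) = t^{-1/p'(t)}` is doubling near the origin. -/
theorem stmt_3 (p : ℝ → ℝ) (C : ℝ)
    (hmono : MonotoneOn p (Set.Ioc 0 1))
    (hp1 : ∀ x ∈ Set.Ioc (0:ℝ) 1, 1 ≤ p x)
    (hC : 0 < C)
    (hint : ∀ a ∈ Set.Ioo (0:ℝ) 1,
      ∫ x in Set.Ioc a 1, x ^ (-(1 - 1 / p x)) / x ≤ C * a ^ (-(1 - 1 / p a))) :
    ∃ C₁ > 0, ∀ x ∈ Set.Ioo (0:ℝ) (1/4), ∀ y ∈ Set.Ioo (0:ℝ) 1,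
      x / 2 < y → y < 2 * x →
        x ^ (-(1 - 1 / p x)) / C₁ ≤ y ^ (-(1 - 1 / p y)) ∧
        y ^ (-(1 - 1 / p y)) ≤ C₁ * x ^ (-(1 - 1 / p x)) := by
  have hlog : 0 < Real.log 2 := Real.log_pos one_lt_two
  obtain ⟨C₁, hC₁⟩ : ∃ C₁ : ℝ, C₁ = 2 + 2 * C / Real.log 2 := ⟨_, rfl⟩
  have hC₁pos : 0 < C₁ := by rw [hC₁]; positivity
  have hC₁2 : 2 ≤ C₁ := by
    have : 0 ≤ 2 * C / Real.log 2 := by positivity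
    linarith
  have hC₁C : 2 * C / Real.log 2 ≤ C₁ := by linarith
  refine ⟨C₁, hC₁pos, ?_⟩
  intro x hx y hy hxy2 hy2x
  obtain ⟨hx0, hx14⟩ := hx
  obtain ⟨hy0, hy1⟩ := hy
  have hxm : x ∈ Set.Ioc (0:ℝ) 1 := ⟨hx0, by linarith⟩
  have hym : y ∈ Set.Ioc (0:ℝ) 1 := ⟨hy0, hy1.le⟩
  have hαx : 0 ≤ 1 - 1 / p x ∧ 1 - 1 / p x ≤ 1 := by
    have h1 : 1 ≤ p x := hp1 x hxm
    have h0 : 0 < p x := lt_of_lt_of_le one_pos h1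
    constructor
    · have : 1 / p x ≤ 1 := by rw [div_le_one h0]; exact h1
      linarith
    · have : 0 ≤ 1 / p x := by positivity
      linarith
  have hαy : 0 ≤ 1 - 1 / p y ∧ 1 - 1 / p y ≤ 1 := by
    have h1 : 1 ≤ p y := hp1 y hym
    have h0 : 0 < p y := lt_of_lt_of_le one_pos h1
    constructor
    · have : 1 / p y ≤ 1 := by rw [div_le_one h0]; exact h1
      linarith
    · have : 0 ≤ 1 / p y := by positivity
      linarith
  have hαmono : ∀ s t : ℝ, s ∈ Set.Ioc (0:ℝ) 1 → t ∈ Set.Ioc (0:ℝ) 1 → s ≤ t →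
      1 - 1 / p s ≤ 1 - 1 / p t := by
    intro s t hs ht hst
    have h0s : 0 < p s := lt_of_lt_of_le one_pos (hp1 s hs)
    have : 1 / p t ≤ 1 / p s := one_div_le_one_div_of_le h0s (hmono hs ht hst)
    linarith
  have hφx : 0 ≤ x ^ (-(1 - 1 / p x)) := Real.rpow_nonneg hx0.le _
  have hφy : 0 ≤ y ^ (-(1 - 1 / p y)) := Real.rpow_nonneg hy0.le _
  constructor
  · -- lower bound: x^{-αx}/C₁ ≤ y^{-αy}
    rw [div_le_iff₀ hC₁pos]
    rcases le_total x y with h | h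
    · -- x ≤ y : elementary
      have key : x ^ (-(1 - 1 / p x)) ≤ 2 * y ^ (-(1 - 1 / p y)) :=
        aux_pt_3 x y _ _ hx0 h hy1.le (by linarith) (hαmono x y hxm hym h) hαx.1 hαy.2
      calc x ^ (-(1 - 1 / p x)) ≤ 2 * y ^ (-(1 - 1 / p y)) := key
        _ ≤ y ^ (-(1 - 1 / p y)) * C₁ := by
            nlinarith [mul_le_mul_of_nonneg_left hC₁2 hφy]
    · -- y ≤ x : use integral condition with (y, x)
      have key := aux_core_3 p C hmono hp1 hint y x hy0 hy1 h (by linarith)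
      have h2 : x ^ (-(1 - 1 / p x)) ≤ 2 * C / Real.log 2 * y ^ (-(1 - 1 / p y)) := by
        rw [div_mul_eq_mul_div, le_div_iff₀ hlog]
        nlinarith
      calc x ^ (-(1 - 1 / p x)) ≤ 2 * C / Real.log 2 * y ^ (-(1 - 1 / p y)) := h2
        _ ≤ y ^ (-(1 - 1 / p y)) * C₁ := by
            nlinarith [mul_le_mul_of_nonneg_left hC₁C hφy]
  · -- upper bound: y^{-αy} ≤ C₁ x^{-αx}
    rcases le_total y x with h | h
    · -- y ≤ x : elementary
      have key : y ^ (-(1 - 1 / p y)) ≤ 2 * x ^ (-(1 - 1 / p x)) :=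
        aux_pt_3 y x _ _ hy0 h (by linarith) (by linarith) (hαmono y x hym hxm h) hαy.1 hαx.2
      calc y ^ (-(1 - 1 / p y)) ≤ 2 * x ^ (-(1 - 1 / p x)) := key
        _ ≤ C₁ * x ^ (-(1 - 1 / p x)) := by
            nlinarith [mul_le_mul_of_nonneg_left hC₁2 hφx]
    · -- x ≤ y : use integral condition with (x, y)
      have key := aux_core_3 p C hmono hp1 hint x y hx0 (by linarith) h (by linarith)
      have h2 : y ^ (-(1 - 1 / p y)) ≤ 2 * C / Real.log 2 * x ^ (-(1 - 1 / p x)) := by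
        rw [div_mul_eq_mul_div, le_div_iff₀ hlog]
        nlinarith
      calc y ^ (-(1 - 1 / p y)) ≤ 2 * C / Real.log 2 * x ^ (-(1 - 1 / p x)) := h2
        _ ≤ C₁ * x ^ (-(1 - 1 / p x)) := by
            nlinarith [mul_le_mul_of_nonneg_left hC₁C hφx]
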